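/- Let Ω ⊂ ℝ² be a bounded open set contained in the strip S = ℝ × [−w/2, w/2], with area |Ω| = A = wL where L > 0. Define u on S by u(x,y) = sin(πx/L) for |x| ≤ L/2, u = 1 for x > L/2, and u = −1 for x < −L/2, and let R = [−L/2, L/2] × [−w/2, w/2]. Then ∫_Ω |∇u|² ≤ ∫_R |∇u|² and ∫_Ω u² ≥ ∫_R u², so the Rayleigh quotient of u on Ω is at most π²/L². -/

import Mathlib

open Real MeasureTheory

theorem stmt_5 (w L : ℝ) (hw : 0 < w) (hL : 0 < L)
    (Ω : Set (ℝ × ℝ)) (hopen : IsOpen Ω) (hbdd : Bornology.IsBounded Ω)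
    (hstrip : Ω ⊆ {q : ℝ × ℝ | q.2 ∈ Set.Icc (-(w/2)) (w/2)})
    (harea : (volume Ω).toReal = w * L)
    (u : ℝ × ℝ → ℝ)
    (hu : ∀ q : ℝ × ℝ, u q =
      if q.1 < -(L/2) then -1
      else if q.1 ≤ L/2 then Real.sin (π * q.1 / L)
      else 1)
    (R : Set (ℝ × ℝ))
    (hR : R = Set.Icc (-(L/2)) (L/2) ×ˢ Set.Icc (-(w/2)) (w/2)) :
    (∫ q in Ω, (((fderiv ℝ u q) (1, 0)) ^ 2 + ((fderiv ℝ u q) (0, 1)) ^ 2))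
      ≤ (∫ q in R, (((fderiv ℝ u q) (1, 0)) ^ 2 + ((fderiv ℝ u q) (0, 1)) ^ 2)) ∧
    (∫ q in R, (u q) ^ 2) ≤ (∫ q in Ω, (u q) ^ 2) ∧
    (∫ q in Ω, (((fderiv ℝ u q) (1, 0)) ^ 2 + ((fderiv ℝ u q) (0, 1)) ^ 2)) /
      (∫ q in Ω, (u q) ^ 2) ≤ π ^ 2 / L ^ 2 := by
  have hLne : L ≠ 0 := ne_of_gt hL
  set c : ℝ := π / L with hc
  have hcpos : 0 < c := div_pos Real.pi_pos hL
  have hcne : c ≠ 0 := ne_of_gt hcpos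
  set D : ℝ × ℝ → ℝ :=
    fun q => if q.1 ∈ Set.Ioo (-(L/2)) (L/2) then c * Real.cos (c * q.1) else 0 with hD
  have hDpos : ∀ q : ℝ × ℝ, q.1 ∈ Set.Ioo (-(L/2)) (L/2) → D q = c * Real.cos (c * q.1) :=
    fun q h => if_pos h
  have hDneg : ∀ q : ℝ × ℝ, q.1 ∉ Set.Ioo (-(L/2)) (L/2) → D q = 0 :=
    fun q h => if_neg h
  have hmeasR : MeasurableSet R := by
    rw [hR]; exact measurableSet_Icc.prod measurableSet_Icc
  have hmeasΩ : MeasurableSet Ω := hopen.measurableSet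
  -- derivative inside
  have hderiv_in : ∀ q : ℝ × ℝ, q.1 ∈ Set.Ioo (-(L/2)) (L/2) →
      fderiv ℝ u q = (Real.cos (c * q.1) * c) • (ContinuousLinearMap.fst ℝ ℝ ℝ) := by
    intro q hq
    have h1 : HasFDerivAt (fun p : ℝ × ℝ => c * p.1)
        (c • ContinuousLinearMap.fst ℝ ℝ ℝ) q :=
      hasFDerivAt_fst.const_mul c
    have h2 : HasDerivAt Real.sin (Real.cos (c * q.1)) (c * q.1) := Real.hasDerivAt_sin _
    have hF : HasFDerivAt (fun p : ℝ × ℝ => Real.sin (c * p.1))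
        ((Real.cos (c * q.1) * c) • ContinuousLinearMap.fst ℝ ℝ ℝ) q := by
      have := h2.comp_hasFDerivAt q h1
      rw [smul_smul] at this
      exact this
    have heq : u =ᶠ[nhds q] fun p : ℝ × ℝ => Real.sin (c * p.1) := by
      have ho : IsOpen {p : ℝ × ℝ | p.1 ∈ Set.Ioo (-(L/2)) (L/2)} :=
        isOpen_Ioo.preimage continuous_fst
      filter_upwards [ho.mem_nhds hq] with p hp
      rw [hu p, if_neg (not_lt.mpr hp.1.le), if_pos hp.2.le, hc, div_mul_eq_mul_div]
    rw [heq.fderiv_eq, hF.fderiv]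
  -- derivative outside
  have hderiv_out : ∀ q : ℝ × ℝ, (q.1 < -(L/2) ∨ L/2 < q.1) → fderiv ℝ u q = 0 := by
    intro q hq
    rcases hq with h | h
    · have heq : u =ᶠ[nhds q] fun _ => (-1 : ℝ) := by
        have ho : IsOpen {p : ℝ × ℝ | p.1 < -(L/2)} :=
          isOpen_lt continuous_fst continuous_const
        filter_upwards [ho.mem_nhds h] with p hp
        rw [hu p, if_pos hp]
      rw [heq.fderiv_eq, fderiv_const_apply]
    · have heq : u =ᶠ[nhds q] fun _ => (1 : ℝ) := by
        have ho : IsOpen {p : ℝ × ℝ | L/2 < p.1} :=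
          isOpen_lt continuous_const continuous_fst
        filter_upwards [ho.mem_nhds h] with p hp
        rw [hu p, if_neg (by push_neg; linarith [hp.le] : ¬ p.1 < -(L/2)),
          if_neg (not_le.mpr hp)]
      rw [heq.fderiv_eq, fderiv_const_apply]
  -- a.e. identification of the energy density
  have hnull : volume {q : ℝ × ℝ | q.1 = -(L/2) ∨ q.1 = L/2} = 0 := by
    have hset : {q : ℝ × ℝ | q.1 = -(L/2) ∨ q.1 = L/2}
        = ({-(L/2), L/2} : Set ℝ) ×ˢ (Set.univ : Set ℝ) := by
      ext q; simp [Set.mem_prod]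
    have hfin : ({-(L/2), L/2} : Set ℝ).Finite := (Set.finite_singleton _).insert _
    rw [hset, Measure.volume_eq_prod, Measure.prod_prod, hfin.measure_zero volume, zero_mul]
  have hae : ∀ᵐ q : ℝ × ℝ,
      ((fderiv ℝ u q) (1, 0)) ^ 2 + ((fderiv ℝ u q) (0, 1)) ^ 2 = (D q) ^ 2 := by
    refine Filter.eventually_iff.mpr (mem_ae_iff.mpr (measure_mono_null ?_ hnull))
    intro q hq
    simp only [Set.mem_compl_iff, Set.mem_setOf_eq] at hq ⊢
    by_contra hq1
    push_neg at hq1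
    apply hq
    rcases lt_trichotomy q.1 (-(L/2)) with h | h | h
    · rw [hderiv_out q (Or.inl h), hDneg q (fun hm => absurd hm.1 (not_lt.mpr h.le))]
      simp
    · exact absurd h hq1.1
    · rcases lt_trichotomy q.1 (L/2) with h2 | h2 | h2
      · have hq' : q.1 ∈ Set.Ioo (-(L/2)) (L/2) := ⟨h, h2⟩
        rw [hderiv_in q hq', hDpos q hq']
        simp only [ContinuousLinearMap.smul_apply, ContinuousLinearMap.coe_fst',
          smul_eq_mul]
        ring
      · exact absurd h2 hq1.2
      · rw [hderiv_out q (Or.inr h2), hDneg q (fun hm => absurd hm.2 (not_lt.mpr h2.le))]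
        simp
  -- rewrite both energy integrals using D
  have hrwΩ : (∫ q in Ω, (((fderiv ℝ u q) (1, 0)) ^ 2 + ((fderiv ℝ u q) (0, 1)) ^ 2))
      = ∫ q in Ω, (D q) ^ 2 := integral_congr_ae (ae_restrict_of_ae hae)
  have hrwR : (∫ q in R, (((fderiv ℝ u q) (1, 0)) ^ 2 + ((fderiv ℝ u q) (0, 1)) ^ 2))
      = ∫ q in R, (D q) ^ 2 := integral_congr_ae (ae_restrict_of_ae hae)
  -- measurability and integrability
  have hDmeas : Measurable D := by
    apply Measurable.ite
    · exact measurable_fst measurableSet_Ioo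
    · exact (measurable_const.mul ((Real.continuous_cos.measurable).comp
        (measurable_const.mul measurable_fst)))
    · exact measurable_const
  have habs : ∀ q : ℝ × ℝ, |D q| ≤ c := by
    intro q
    by_cases h : q.1 ∈ Set.Ioo (-(L/2)) (L/2)
    · rw [hDpos q h, abs_mul, abs_of_pos hcpos]
      calc c * |Real.cos (c * q.1)| ≤ c * 1 :=
            mul_le_mul_of_nonneg_left (Real.abs_cos_le_one _) hcpos.le
        _ = c := mul_one c
    · rw [hDneg q h, abs_zero]; exact hcpos.le
  have hDbound : ∀ q : ℝ × ℝ, ‖(D q) ^ 2‖ ≤ c ^ 2 := by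
    intro q
    calc ‖(D q) ^ 2‖ = |D q| ^ 2 := by rw [Real.norm_eq_abs, abs_pow]
      _ ≤ c ^ 2 := pow_le_pow_left₀ (abs_nonneg _) (habs q) 2
  have hDint : ∀ s : Set (ℝ × ℝ), volume s < ⊤ → IntegrableOn (fun q => (D q) ^ 2) s := by
    intro s hs
    refine Integrable.mono' (g := fun _ => c ^ 2) (integrableOn_const hs.ne)
      ((hDmeas.pow_const 2).aestronglyMeasurable) ?_
    exact Filter.Eventually.of_forall fun q => hDbound q
  have humeas : Measurable u := by
    have hux : u = fun q : ℝ × ℝ => if q.1 < -(L/2) then (-1 : ℝ)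
        else if q.1 ≤ L/2 then Real.sin (π * q.1 / L) else 1 := funext hu
    rw [hux]
    apply Measurable.ite (measurable_fst measurableSet_Iio) measurable_const
    apply Measurable.ite (measurable_fst measurableSet_Iic)
    · exact Real.continuous_sin.measurable.comp
        ((measurable_const.mul measurable_fst).div_const L)
    · exact measurable_const
  have hubound : ∀ q : ℝ × ℝ, ‖(u q) ^ 2‖ ≤ 1 := by
    intro q
    rw [Real.norm_eq_abs, abs_pow, ← one_pow 2]
    apply pow_le_pow_left₀ (abs_nonneg _)
    rw [hu q]
    rcases lt_or_ge q.1 (-(L/2)) with h | h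
    · simp [if_pos h]
    · rw [if_neg (not_lt.mpr h)]
      rcases le_or_gt q.1 (L/2) with h2 | h2
      · rw [if_pos h2]; exact Real.abs_sin_le_one _
      · rw [if_neg (not_le.mpr h2)]; simp
  have huint : ∀ s : Set (ℝ × ℝ), volume s < ⊤ → IntegrableOn (fun q => (u q) ^ 2) s := by
    intro s hs
    refine Integrable.mono' (g := fun _ => (1 : ℝ)) (integrableOn_const hs.ne)
      ((humeas.pow_const 2).aestronglyMeasurable) ?_
    exact Filter.Eventually.of_forall fun q => hubound q
  -- finiteness of measures
  have hΩfin : volume Ω < ⊤ := hbdd.measure_lt_top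
  have hvolR : volume R = ENNReal.ofReal (w * L) := by
    rw [hR, Measure.volume_eq_prod, Measure.prod_prod, Real.volume_Icc, Real.volume_Icc,
      ← ENNReal.ofReal_mul (by linarith)]
    congr 1; ring
  have hRfin : volume R < ⊤ := by rw [hvolR]; exact ENNReal.ofReal_lt_top
  have hvolΩ : volume Ω = ENNReal.ofReal (w * L) := by
    rw [← harea, ENNReal.ofReal_toReal (ne_of_lt hΩfin)]
  -- Part 1
  have hDzero_off : ∀ q ∈ Ω \ R, (D q) ^ 2 = 0 := by
    intro q hq
    have h1 : q.1 ∉ Set.Ioo (-(L/2)) (L/2) := by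
      intro hm
      exact hq.2 (by rw [hR]; exact ⟨⟨hm.1.le, hm.2.le⟩, hstrip hq.1⟩)
    rw [hDneg q h1]; norm_num
  have part1 : (∫ q in Ω, (D q) ^ 2) ≤ ∫ q in R, (D q) ^ 2 := by
    have hsplit := integral_inter_add_diff (f := fun q => (D q) ^ 2) (s := Ω) (t := R)
      hmeasR (hDint Ω hΩfin)
    have hzero : (∫ q in Ω \ R, (D q) ^ 2) = 0 := by
      rw [setIntegral_congr_fun (hmeasΩ.diff hmeasR) hDzero_off]
      exact integral_zero _ _
    rw [← hsplit, hzero, add_zero]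
    apply setIntegral_mono_set (hDint R hRfin)
    · exact Filter.Eventually.of_forall fun q => sq_nonneg _
    · exact Set.inter_subset_right.eventuallyLE
  -- measure exchange
  have hexch : volume (R \ Ω) = volume (Ω \ R) := by
    have h1 := measure_diff_add_inter (μ := volume) R hmeasΩ
    have h2 := measure_diff_add_inter (μ := volume) Ω hmeasR
    rw [Set.inter_comm R Ω] at h1
    have hfin : volume (Ω ∩ R) ≠ ⊤ :=
      ne_of_lt (lt_of_le_of_lt (measure_mono Set.inter_subset_left) hΩfin)
    have heq2 : volume (R \ Ω) + volume (Ω ∩ R) = volume (Ω \ R) + volume (Ω ∩ R) := by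
      rw [h1, h2, hvolR, hvolΩ]
    rwa [add_comm (volume (R \ Ω)), add_comm (volume (Ω \ R)),
      ENNReal.add_right_inj hfin] at heq2
  -- Part 2
  have hu_one_off : ∀ q ∈ Ω \ R, (u q) ^ 2 = 1 := by
    intro q hq
    have h1 : q.1 ∉ Set.Icc (-(L/2)) (L/2) := by
      intro hm
      exact hq.2 (by rw [hR]; exact ⟨hm, hstrip hq.1⟩)
    rw [Set.mem_Icc, not_and_or] at h1
    rw [hu q]
    rcases h1 with h | h
    · rw [if_pos (not_le.mp h)]; norm_num
    · rw [if_neg (by push_neg; linarith [not_le.mp h] : ¬ q.1 < -(L/2)), if_neg h]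
      norm_num
  have part2 : (∫ q in R, (u q) ^ 2) ≤ ∫ q in Ω, (u q) ^ 2 := by
    have hsR := integral_inter_add_diff (f := fun q => (u q) ^ 2) (s := R) (t := Ω)
      hmeasΩ (huint R hRfin)
    have hsΩ := integral_inter_add_diff (f := fun q => (u q) ^ 2) (s := Ω) (t := R)
      hmeasR (huint Ω hΩfin)
    rw [← hsR, ← hsΩ, Set.inter_comm R Ω]
    gcongr (∫ q in Ω ∩ R, (u q) ^ 2) + ?_
    have hRdiff_fin : volume (R \ Ω) < ⊤ :=
      lt_of_le_of_lt (measure_mono Set.diff_subset) hRfin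
    calc (∫ q in R \ Ω, (u q) ^ 2) ≤ ∫ _ in R \ Ω, (1 : ℝ) := by
          apply setIntegral_mono_on (huint _ hRdiff_fin)
            (integrableOn_const hRdiff_fin.ne) (hmeasR.diff hmeasΩ)
          intro q _
          have hb := hubound q
          rwa [Real.norm_eq_abs, abs_of_nonneg (sq_nonneg _)] at hb
      _ = (volume (R \ Ω)).toReal := by rw [setIntegral_const, smul_eq_mul, mul_one, measureReal_def]
      _ = (volume (Ω \ R)).toReal := by rw [hexch]
      _ = ∫ _ in Ω \ R, (1 : ℝ) := by rw [setIntegral_const, smul_eq_mul, mul_one, measureReal_def]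
      _ = ∫ q in Ω \ R, (u q) ^ 2 :=
          setIntegral_congr_fun (μ := volume) (hmeasΩ.diff hmeasR)
            (fun q hq => (hu_one_off q hq).symm)
  -- exact values on R
  have hIccw : (∫ _ in Set.Icc (-(w/2)) (w/2), (1 : ℝ)) = w := by
    rw [setIntegral_const, smul_eq_mul, mul_one, measureReal_def, Real.volume_Icc,
      ENNReal.toReal_ofReal (by linarith)]
    ring
  have hend2 : c * (L/2) = π/2 := by
    rw [hc, show π / L * (L/2) = (π / L * L) / 2 by ring, div_mul_cancel₀ _ hLne]
  have hend1 : c * -(L/2) = -(π/2) := by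
    rw [show c * -(L/2) = -(c * (L/2)) by ring, hend2]
  have hnumR : (∫ q in R, (D q) ^ 2) = (c * (π/2)) * w := by
    have hcongr : ∀ q ∈ R, (D q) ^ 2 = (c * Real.cos (c * q.1)) ^ 2 := by
      intro q hq
      rw [hR] at hq
      by_cases h : q.1 ∈ Set.Ioo (-(L/2)) (L/2)
      · rw [hDpos q h]
      · have hx : q.1 = -(L/2) ∨ q.1 = L/2 := by
          rcases hq.1.1.lt_or_eq with h1 | h1
          · rcases hq.1.2.lt_or_eq with h2 | h2
            · exact absurd ⟨h1, h2⟩ h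
            · exact Or.inr h2
          · exact Or.inl h1.symm
        have hcos : Real.cos (c * q.1) = 0 := by
          rcases hx with h1 | h1
          · rw [h1, hend1, Real.cos_neg, Real.cos_pi_div_two]
          · rw [h1, hend2, Real.cos_pi_div_two]
        rw [hDneg q h, hcos]
        ring
    rw [setIntegral_congr_fun hmeasR hcongr, hR, Measure.volume_eq_prod]
    have hkey := setIntegral_prod_mul (μ := (volume : Measure ℝ)) (ν := (volume : Measure ℝ))
      (fun x => (c * Real.cos (c * x)) ^ 2) (fun _ => (1 : ℝ))
      (Set.Icc (-(L/2)) (L/2)) (Set.Icc (-(w/2)) (w/2))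
    simp only [mul_one] at hkey
    rw [hkey, hIccw]
    congr 1
    rw [integral_Icc_eq_integral_Ioc,
      ← intervalIntegral.integral_of_le (by linarith : -(L/2) ≤ L/2)]
    have hsq : ∀ x : ℝ, (c * Real.cos (c * x)) ^ 2 = c ^ 2 * (Real.cos (c * x)) ^ 2 := by
      intro x; ring
    simp_rw [hsq]
    rw [intervalIntegral.integral_const_mul]
    rw [intervalIntegral.integral_comp_mul_left (fun y => Real.cos y ^ 2) hcne,
      hend1, hend2, integral_cos_sq]
    rw [Real.cos_pi_div_two, Real.cos_neg, Real.cos_pi_div_two, smul_eq_mul]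
    rw [show (0 * Real.sin (π/2) - 0 * Real.sin (-(π/2)) + π/2 - -(π/2)) / 2 = π/2 by ring]
    rw [← mul_assoc, sq, mul_assoc c c c⁻¹, mul_inv_cancel₀ hcne, mul_one]
  have hdenR : (∫ q in R, (u q) ^ 2) = (c⁻¹ * (π/2)) * w := by
    have hcongr : ∀ q ∈ R, (u q) ^ 2 = (Real.sin (c * q.1)) ^ 2 := by
      intro q hq
      rw [hR] at hq
      rw [hu q, if_neg (not_lt.mpr hq.1.1), if_pos hq.1.2, hc, div_mul_eq_mul_div]
    rw [setIntegral_congr_fun hmeasR hcongr, hR, Measure.volume_eq_prod]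
    have hkey := setIntegral_prod_mul (μ := (volume : Measure ℝ)) (ν := (volume : Measure ℝ))
      (fun x => (Real.sin (c * x)) ^ 2) (fun _ => (1 : ℝ))
      (Set.Icc (-(L/2)) (L/2)) (Set.Icc (-(w/2)) (w/2))
    simp only [mul_one] at hkey
    rw [hkey, hIccw]
    congr 1
    rw [integral_Icc_eq_integral_Ioc,
      ← intervalIntegral.integral_of_le (by linarith : -(L/2) ≤ L/2)]
    rw [intervalIntegral.integral_comp_mul_left (fun y => Real.sin y ^ 2) hcne,
      hend1, hend2, integral_sin_sq]
    rw [Real.cos_pi_div_two, Real.cos_neg, Real.cos_pi_div_two, smul_eq_mul]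
    ring
  have hdenRpos : 0 < (c⁻¹ * (π/2)) * w :=
    mul_pos (mul_pos (inv_pos.mpr hcpos) (by positivity)) hw
  have hnumRnonneg : 0 ≤ (c * (π/2)) * w := by positivity
  refine ⟨by rw [hrwΩ, hrwR]; exact part1, part2, ?_⟩
  rw [hrwΩ]
  have hwne : w ≠ 0 := ne_of_gt hw
  calc (∫ q in Ω, (D q) ^ 2) / (∫ q in Ω, (u q) ^ 2)
      ≤ ((c * (π/2)) * w) / ((c⁻¹ * (π/2)) * w) := by
        apply div_le_div₀ hnumRnonneg (le_trans part1 (le_of_eq hnumR)) hdenRpos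
        exact le_trans (le_of_eq hdenR.symm) part2
    _ = c ^ 2 := by
        rw [mul_div_mul_right _ _ hwne,
          mul_div_mul_right _ _ (by positivity : (π/2 : ℝ) ≠ 0)]
        rw [div_eq_mul_inv, inv_inv, ← sq]
    _ = π ^ 2 / L ^ 2 := by rw [hc, div_pow]
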